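/- The algebra homomorphism from the group algebra ℂ[S_n] to End(V^⊗n) given by permuting tensor factors is injective if and only if dim V ≥ n. -/

import Mathlib

open scoped TensorProduct PiTensorProduct

/-- The monoid homomorphism `Sₙ → End(V^⊗n)` given by permuting tensor factors. -/
noncomputable def tensorPermHom (n : ℕ) (V : Type*) [AddCommGroup V] [Module ℂ V] :
    Equiv.Perm (Fin n) →* Module.End ℂ (⨂[ℂ] _ : Fin n, V) where
  toFun σ := (PiTensorProduct.reindex ℂ (fun _ : Fin n => V) σ).toLinearMap
  map_one' := by
    ext x
    simp [Equiv.Perm.one_def, PiTensorProduct.reindex_refl]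
  map_mul' σ τ := by
    ext x
    simp [Equiv.Perm.mul_def, ← PiTensorProduct.reindex_trans, LinearEquiv.trans_apply,
      Module.End.mul_apply]

lemma tensorPermHom_tprod (n : ℕ) (V : Type*) [AddCommGroup V] [Module ℂ V]
    (σ : Equiv.Perm (Fin n)) (f : Fin n → V) :
    tensorPermHom n V σ (PiTensorProduct.tprod ℂ f)
      = PiTensorProduct.tprod ℂ (fun i => f (σ.symm i)) := by
  simp [tensorPermHom, PiTensorProduct.reindex_tprod]

/-- The algebra homomorphism `ℂ[Sₙ] → End(V^⊗n)` induced by permuting tensor factors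
is injective if and only if `dim V ≥ n`. -/
theorem groupAlgebra_to_tensorEnd_injective_iff (n : ℕ) (V : Type*) [AddCommGroup V]
    [Module ℂ V] [FiniteDimensional ℂ V] :
    Function.Injective
      (MonoidAlgebra.lift ℂ (Module.End ℂ (⨂[ℂ] _ : Fin n, V)) (Equiv.Perm (Fin n))
        (tensorPermHom n V)) ↔ n ≤ Module.finrank ℂ V := by
  set F := (MonoidAlgebra.lift ℂ (Module.End ℂ (⨂[ℂ] _ : Fin n, V)) (Equiv.Perm (Fin n))
        (tensorPermHom n V)) with hF
  constructor
  · -- injective → n ≤ finrank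
    intro hinj
    by_contra hlt
    push_neg at hlt
    -- the antisymmetrizer
    set a : MonoidAlgebra ℂ (Equiv.Perm (Fin n)) :=
      ∑ σ : Equiv.Perm (Fin n), MonoidAlgebra.single σ ((Equiv.Perm.sign σ : ℤ) : ℂ) with ha
    have hane : a ≠ 0 := by
      intro h0
      have : a.coeff 1 = 1 := by
        rw [ha]
        rw [MonoidAlgebra.coeff_sum, Finsupp.finset_sum_apply]
        rw [Finset.sum_eq_single (1 : Equiv.Perm (Fin n))]
        · simp
        · intro b _ hb
          simp [MonoidAlgebra.coeff_single_apply, hb]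
        · simp
      rw [h0] at this
      simp at this
    have hFa : F a = 0 := by
      ext f
      simp only [LinearMap.zero_apply, LinearMap.compMultilinearMap_apply]
      -- F a (tprod f) = alternatization (tprod) f = 0
      have h1 : F a (PiTensorProduct.tprod ℂ f)
          = ∑ σ : Equiv.Perm (Fin n),
              Equiv.Perm.sign σ • PiTensorProduct.tprod ℂ (fun i => f (σ.symm i)) := by
        rw [ha, map_sum]
        rw [LinearMap.coe_sum, Finset.sum_apply]
        refine Finset.sum_congr rfl fun σ _ => ?_
        rw [MonoidAlgebra.lift_single]
        simp only [LinearMap.smul_apply]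
        rw [tensorPermHom_tprod]
        rw [Units.smul_def, Int.cast_smul_eq_zsmul]
      have h2 : (∑ σ : Equiv.Perm (Fin n),
              Equiv.Perm.sign σ • PiTensorProduct.tprod ℂ (fun i => f (σ.symm i)))
          = MultilinearMap.alternatization (PiTensorProduct.tprod ℂ
              (s := fun _ : Fin n => V)) f := by
        rw [MultilinearMap.alternatization_apply]
        rw [← Equiv.sum_comp (Equiv.inv (Equiv.Perm (Fin n)))]
        refine Finset.sum_congr rfl fun σ _ => ?_
        simp [MultilinearMap.domDomCongr_apply, Function.comp, Equiv.Perm.inv_def]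
        rfl
      have h3 : ¬ LinearIndependent ℂ f := by
        intro hli
        have := hli.fintype_card_le_finrank
        simp at this
        omega
      rw [h1, h2, AlternatingMap.map_linearDependent _ f h3]
    exact hane (hinj (by rw [hFa, map_zero]))
  · -- n ≤ finrank → injective
    intro h
    rw [injective_iff_map_eq_zero]
    intro x hx
    classical
    set b := Module.finBasis ℂ V with hb
    set e : Fin n → V := fun i => b (Fin.castLE h i) with he
    ext τ
    -- the separating functional
    set L : (⨂[ℂ] _ : Fin n, V) →ₗ[ℂ] ℂ :=
      PiTensorProduct.lift ((MultilinearMap.mkPiAlgebra ℂ (Fin n) ℂ).compLinearMap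
        (fun i => b.coord (Fin.castLE h (τ⁻¹ i)))) with hL
    have key : ∀ σ : Equiv.Perm (Fin n),
        L (PiTensorProduct.tprod ℂ (fun i => e (σ.symm i)))
          = if σ = τ then 1 else 0 := by
      intro σ
      rw [hL, PiTensorProduct.lift.tprod]
      simp only [MultilinearMap.compLinearMap_apply, MultilinearMap.mkPiAlgebra_apply, he]
      by_cases hστ : σ = τ
      · subst hστ
        simp [Module.Basis.coord_apply, Module.Basis.repr_self, Finsupp.single_apply, Equiv.Perm.inv_def]
      · rw [if_neg hστ]
        have : ∃ i, τ⁻¹ i ≠ σ⁻¹ i := by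
          by_contra hc
          push_neg at hc
          apply hστ
          have : (τ⁻¹ : Equiv.Perm (Fin n)) = σ⁻¹ := Equiv.ext hc
          have := congrArg (·⁻¹) this
          simpa using this.symm
        obtain ⟨i, hi⟩ := this
        apply Finset.prod_eq_zero (Finset.mem_univ i)
        have hne : Fin.castLE h (τ⁻¹ i) ≠ Fin.castLE h (σ.symm i) := by
          intro hc
          exact hi (Fin.castLE_injective h hc)
        simp only [Module.Basis.coord_apply, Module.Basis.repr_self, Finsupp.single_apply]
        rw [if_neg]
        simpa [Equiv.Perm.inv_def, eq_comm] using hi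
    have : L (F x (PiTensorProduct.tprod ℂ e)) = x.coeff τ := by
      have hFx : F x (PiTensorProduct.tprod ℂ e)
          = x.coeff.sum fun σ c => c • PiTensorProduct.tprod ℂ (fun i => e (σ.symm i)) := by
        rw [hF, MonoidAlgebra.lift_apply]
        rw [Finsupp.sum, LinearMap.coe_sum, Finset.sum_apply, Finsupp.sum]
        refine Finset.sum_congr rfl fun σ _ => ?_
        simp [tensorPermHom_tprod]
      rw [hFx, Finsupp.sum, map_sum]
      simp only [map_smul, key, smul_eq_mul, mul_ite, mul_one, mul_zero]
      rw [Finset.sum_ite_eq' x.coeff.support τ]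
      by_cases hτ : τ ∈ x.coeff.support
      · simp [hτ]
      · simp [hτ, Finsupp.notMem_support_iff.mp hτ]
    rw [hx] at this
    simpa using this.symm
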